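/- For fixed reals a, b, the ratio Γ(x+a)/Γ(x+b) is asymptotically equal to x^{a-b} as x → ∞; i.e., lim_{x→∞} (Γ(x+a)/Γ(x+b)) · x^{b-a} = 1. -/

import Mathlib

open Real Filter

namespace GammaRatioAux

/-- Wendel's upper bound: for `s ∈ [0,1]` and `x > 0`, `Γ(x+s) ≤ Γ(x) * x^s`. -/
lemma wendel_upper {s x : ℝ} (hs0 : 0 ≤ s) (hs1 : s ≤ 1) (hx : 0 < x) :
    Gamma (x + s) ≤ Gamma x * x ^ s := by
  have hx1 : (0:ℝ) < x + 1 := by linarith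
  have h := Real.convexOn_log_Gamma.2 (Set.mem_Ioi.mpr hx) (Set.mem_Ioi.mpr hx1)
    (by linarith : (0:ℝ) ≤ 1 - s) hs0 (by ring)
  simp only [smul_eq_mul, Function.comp_apply] at h
  have harg : (1 - s) * x + s * (x + 1) = x + s := by ring
  rw [harg] at h
  have hG1 : Gamma (x + 1) = x * Gamma x := Real.Gamma_add_one hx.ne'
  have hGx : 0 < Gamma x := Real.Gamma_pos_of_pos hx
  have hlog : log (Gamma (x + 1)) = log x + log (Gamma x) := by
    rw [hG1, Real.log_mul hx.ne' hGx.ne']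
  rw [hlog] at h
  have h2 : log (Gamma (x + s)) ≤ log (Gamma x) + s * log x := by nlinarith [h]
  have hGxs : 0 < Gamma (x + s) := Real.Gamma_pos_of_pos (by linarith)
  calc Gamma (x + s) = Real.exp (log (Gamma (x + s))) := (Real.exp_log hGxs).symm
    _ ≤ Real.exp (log (Gamma x) + s * log x) := Real.exp_le_exp.mpr h2
    _ = Gamma x * x ^ s := by
        rw [Real.exp_add, Real.exp_log hGx, Real.rpow_def_of_pos hx, mul_comm s (log x)]

/-- Wendel's lower bound. -/
lemma wendel_lower {s x : ℝ} (hs0 : 0 ≤ s) (hs1 : s ≤ 1) (hx : 0 < x) :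
    x * Gamma x ≤ Gamma (x + s) * (x + s) ^ (1 - s) := by
  have hxs : 0 < x + s := by linarith
  have h := wendel_upper (s := 1 - s) (x := x + s) (by linarith) (by linarith) hxs
  have : x + s + (1 - s) = x + 1 := by ring
  rw [this, Real.Gamma_add_one hx.ne'] at h
  exact h

/-- The key limit for one shift. -/
lemma T (c : ℝ) :
    Tendsto (fun x : ℝ => Gamma (x + c) / Gamma x * x ^ (-c)) atTop (nhds 1) := by
  -- first: the case c ∈ [0,1)
  have base : ∀ s : ℝ, 0 ≤ s → s < 1 →
      Tendsto (fun x : ℝ => Gamma (x + s) / Gamma x * x ^ (-s)) atTop (nhds 1) := by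
    intro s hs0 hs1
    have hxs_top : Tendsto (fun x : ℝ => x + s) atTop atTop :=
      tendsto_atTop_add_const_right _ _ tendsto_id
    -- x/(x+s) → 1
    have hquot : Tendsto (fun x : ℝ => x / (x + s)) atTop (nhds 1) := by
      have h0 : Tendsto (fun x : ℝ => s / (x + s)) atTop (nhds 0) :=
        Tendsto.div_atTop tendsto_const_nhds hxs_top
      have h1 : Tendsto (fun x : ℝ => 1 - s / (x + s)) atTop (nhds 1) := by
        simpa using tendsto_const_nhds.sub h0
      refine h1.congr' ?_
      filter_upwards [eventually_gt_atTop (max 0 (-s))] with x hx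
      have hxs : 0 < x + s := by
        have := lt_of_le_of_lt (le_max_right 0 (-s)) hx; linarith
      field_simp
      ring
    -- lower bound tends to 1
    have hlow : Tendsto (fun x : ℝ => (x / (x + s)) ^ (1 - s)) atTop (nhds 1) := by
      have := hquot.rpow_const (p := 1 - s) (Or.inr (by linarith))
      simpa using this
    refine tendsto_of_tendsto_of_tendsto_of_le_of_le' hlow tendsto_const_nhds ?_ ?_
    · -- lower bound
      filter_upwards [eventually_gt_atTop (max 0 (-s))] with x hx
      have hx0 : 0 < x := lt_of_le_of_lt (le_max_left 0 (-s)) hx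
      have hxs : 0 < x + s := by linarith
      have hGx : 0 < Gamma x := Real.Gamma_pos_of_pos hx0
      have hl := wendel_lower hs0 hs1.le hx0
      have key : x * (x + s) ^ (s - 1) ≤ Gamma (x + s) / Gamma x := by
        rw [le_div_iff₀ hGx]
        have hmul := mul_le_mul_of_nonneg_right hl (Real.rpow_pos_of_pos hxs (s - 1)).le
        have hcan : (x + s) ^ (1 - s) * (x + s) ^ (s - 1) = 1 := by
          rw [← Real.rpow_add hxs]; norm_num
        calc x * (x + s) ^ (s - 1) * Gamma x = x * Gamma x * (x + s) ^ (s - 1) := by ring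
          _ ≤ Gamma (x + s) * (x + s) ^ (1 - s) * (x + s) ^ (s - 1) := hmul
          _ = Gamma (x + s) := by rw [mul_assoc, hcan, mul_one]
      have hxp : (0:ℝ) < x ^ (-s) := Real.rpow_pos_of_pos hx0 _
      have h2 : x * (x + s) ^ (s - 1) * x ^ (-s) ≤ Gamma (x + s) / Gamma x * x ^ (-s) :=
        mul_le_mul_of_nonneg_right key hxp.le
      have e1 : (x / (x + s)) ^ (1 - s) = x ^ (1 - s) * (x + s) ^ (s - 1) := by
        rw [Real.div_rpow hx0.le hxs.le, div_eq_mul_inv, ← Real.rpow_neg hxs.le]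
        ring_nf
      have e2 : x ^ (1 - s) = x * x ^ (-s) := by
        rw [show (1 - s) = 1 + -s by ring, Real.rpow_add hx0, Real.rpow_one]
      refine le_trans (le_of_eq ?_) h2
      rw [e1, e2]; ring
    · -- upper bound
      filter_upwards [eventually_gt_atTop 0] with x hx0
      have hGx : 0 < Gamma x := Real.Gamma_pos_of_pos hx0
      have hu := wendel_upper hs0 hs1.le hx0
      have : Gamma (x + s) / Gamma x ≤ x ^ s := by
        rw [div_le_iff₀ hGx, mul_comm]; exact hu
      have hxp : (0:ℝ) < x ^ (-s) := Real.rpow_pos_of_pos hx0 _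
      calc Gamma (x + s) / Gamma x * x ^ (-s) ≤ x ^ s * x ^ (-s) :=
            mul_le_mul_of_nonneg_right this hxp.le
        _ = 1 := by rw [← Real.rpow_add hx0]; norm_num
  -- succ step
  have step_up : ∀ c : ℝ,
      Tendsto (fun x : ℝ => Gamma (x + c) / Gamma x * x ^ (-c)) atTop (nhds 1) →
      Tendsto (fun x : ℝ => Gamma (x + (c + 1)) / Gamma x * x ^ (-(c + 1))) atTop (nhds 1) := by
    intro c hT
    have hfac : Tendsto (fun x : ℝ => (x + c) / x) atTop (nhds 1) := by
      have h0 : Tendsto (fun x : ℝ => c / x) atTop (nhds 0) :=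
        Tendsto.div_atTop tendsto_const_nhds tendsto_id
      have h1 : Tendsto (fun x : ℝ => 1 + c / x) atTop (nhds 1) := by
        simpa using tendsto_const_nhds.add h0
      refine h1.congr' ?_
      filter_upwards [eventually_gt_atTop 0] with x hx
      field_simp
    have := hT.mul hfac
    rw [mul_one] at this
    refine this.congr' ?_
    filter_upwards [eventually_gt_atTop (max 0 (-c))] with x hx
    have hx0 : 0 < x := lt_of_le_of_lt (le_max_left 0 (-c)) hx
    have hxc : 0 < x + c := by
      have := lt_of_le_of_lt (le_max_right 0 (-c)) hx; linarith
    have hG : Gamma (x + (c + 1)) = (x + c) * Gamma (x + c) := by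
      rw [show x + (c + 1) = (x + c) + 1 by ring, Real.Gamma_add_one hxc.ne']
    rw [hG, show -(c+1) = -c + -1 by ring, Real.rpow_add hx0, Real.rpow_neg_one]
    field_simp
  -- pred step
  have step_down : ∀ c : ℝ,
      Tendsto (fun x : ℝ => Gamma (x + c) / Gamma x * x ^ (-c)) atTop (nhds 1) →
      Tendsto (fun x : ℝ => Gamma (x + (c - 1)) / Gamma x * x ^ (-(c - 1))) atTop (nhds 1) := by
    intro c hT
    have hfac : Tendsto (fun x : ℝ => x / (x + (c - 1))) atTop (nhds 1) := by
      have htop : Tendsto (fun x : ℝ => x + (c - 1)) atTop atTop :=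
        tendsto_atTop_add_const_right _ _ tendsto_id
      have h0 : Tendsto (fun x : ℝ => (c - 1) / (x + (c - 1))) atTop (nhds 0) :=
        Tendsto.div_atTop tendsto_const_nhds htop
      have h1 : Tendsto (fun x : ℝ => 1 - (c - 1) / (x + (c - 1))) atTop (nhds 1) := by
        simpa using tendsto_const_nhds.sub h0
      refine h1.congr' ?_
      filter_upwards [eventually_gt_atTop (max 0 (-(c - 1)))] with x hx
      have hxc : 0 < x + (c - 1) := by
        have := lt_of_le_of_lt (le_max_right 0 (-(c - 1))) hx; linarith
      field_simp
      ring
    have := hT.mul hfac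
    rw [mul_one] at this
    refine this.congr' ?_
    filter_upwards [eventually_gt_atTop (max 0 (-(c - 1)))] with x hx
    have hx0 : 0 < x := lt_of_le_of_lt (le_max_left 0 (-(c - 1))) hx
    have hxc : 0 < x + (c - 1) := by
      have := lt_of_le_of_lt (le_max_right 0 (-(c - 1))) hx; linarith
    have hG : Gamma (x + c) = (x + (c - 1)) * Gamma (x + (c - 1)) := by
      rw [show x + c = (x + (c - 1)) + 1 by ring, Real.Gamma_add_one hxc.ne']
    rw [hG, show -(c-1) = -c + 1 by ring, Real.rpow_add hx0, Real.rpow_one]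
    field_simp
  -- assemble: c = fract c + ⌊c⌋
  have main : ∀ n : ℤ, Tendsto
      (fun x : ℝ => Gamma (x + (Int.fract c + n)) / Gamma x * x ^ (-(Int.fract c + n)))
      atTop (nhds 1) := by
    intro n
    induction n using Int.induction_on with
    | zero => simpa using base (Int.fract c) (Int.fract_nonneg c) (Int.fract_lt_one c)
    | succ k ih =>
        have := step_up _ ih
        simpa [show (Int.fract c + k) + 1 = Int.fract c + ((k : ℝ) + 1) by ring] using this
    | pred k ih =>
        have := step_down _ ih
        simpa [show (Int.fract c + -(k:ℝ)) - 1 = Int.fract c + (-(k:ℝ) - 1) by ring] using this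
  have := main ⌊c⌋
  rwa [show Int.fract c + (⌊c⌋ : ℝ) = c by rw [Int.fract]; ring] at this

end GammaRatioAux

theorem gammaRatio_asymptotic (a b : ℝ) :
    Tendsto (fun x : ℝ => Real.Gamma (x + a) / Real.Gamma (x + b) * x ^ (b - a))
      atTop (nhds 1) := by
  have hA := GammaRatioAux.T a
  have hB := GammaRatioAux.T b
  have hdiv := hA.div hB one_ne_zero
  rw [div_one] at hdiv
  refine hdiv.congr' ?_
  filter_upwards [eventually_gt_atTop (max 0 (-b))] with x hx
  have hx0 : 0 < x := lt_of_le_of_lt (le_max_left 0 (-b)) hx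
  have hxb : 0 < x + b := by
    have := lt_of_le_of_lt (le_max_right 0 (-b)) hx; linarith
  have hGx : 0 < Real.Gamma x := Real.Gamma_pos_of_pos hx0
  have hGxb : 0 < Real.Gamma (x + b) := Real.Gamma_pos_of_pos hxb
  have hpa : (0:ℝ) < x ^ (-a) := Real.rpow_pos_of_pos hx0 _
  have hpb : (0:ℝ) < x ^ (-b) := Real.rpow_pos_of_pos hx0 _
  rw [show b - a = -a - -b by ring, Real.rpow_sub hx0]
  simp only [Pi.div_apply]
  field_simp
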